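/- Let ħ > 0, let Σ be a real symmetric positive definite 2n×2n matrix, and let Ω_Σ = {z ∈ ℝ^{2n} : (1/2) Σ⁻¹ z·z ≤ 1} be its covariance ellipsoid. Then there exists S ∈ Sp(n) such that S(B^{2n}(√ħ)) ⊆ Ω_Σ if and only if the symplectic polar dual satisfies Ω_Σ^{ħ,ω} ⊆ Ω_Σ. -/

import Mathlib

open Matrix ComplexOrder MeasureTheory

noncomputable section

/-- Phase space ℝ^{2n} ≃ ℝⁿ × ℝⁿ, with coordinates z = (x,p). -/
abbrev PS (n : ℕ) := Fin n ⊕ Fin n → ℝ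

/-- The standard symplectic matrix J = [[0, I], [-I, 0]]. -/
def Jmat (n : ℕ) : Matrix (Fin n ⊕ Fin n) (Fin n ⊕ Fin n) ℝ :=
  Matrix.fromBlocks 0 1 (-1) 0

/-- The standard symplectic form ω(z,z′) = (Jz)·z′. -/
def symp (n : ℕ) (z z' : PS n) : ℝ := (Jmat n).mulVec z ⬝ᵥ z'

/-- The symplectic group Sp(n) = {S : SᵀJS = J}. -/
def Sp (n : ℕ) : Set (Matrix (Fin n ⊕ Fin n) (Fin n ⊕ Fin n) ℝ) :=
  {S | Sᵀ * Jmat n * S = Jmat n}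

/-- Symplectic ℏ-polar dual Ω^{ℏ,ω} = {z′ : sup_{z∈Ω} ω(z,z′) ≤ ℏ}. -/
def sympDual (n : ℕ) (ℏ : ℝ) (Ω : Set (PS n)) : Set (PS n) :=
  {z' | ∀ z ∈ Ω, symp n z z' ≤ ℏ}

/-- The closed Euclidean ball B^{2n}(√ℏ) of radius √ℏ centered at 0. -/
def ball2n (n : ℕ) (ℏ : ℝ) : Set (PS n) := {z | z ⬝ᵥ z ≤ ℏ}

/-- The covariance ellipsoid Ω_Σ = {z : (1/2)Σ⁻¹z·z ≤ 1}. -/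
def covEll (n : ℕ) (Sig : Matrix (Fin n ⊕ Fin n) (Fin n ⊕ Fin n) ℝ) : Set (PS n) :=
  {z | (1 / 2 : ℝ) * (Sig⁻¹.mulVec z ⬝ᵥ z) ≤ 1}

set_option linter.unusedSectionVars false
set_option maxHeartbeats 800000
variable {m : Type*} [Fintype m] [DecidableEq m]

open scoped MatrixOrder in
noncomputable def Matrix.PosSemidef.sqrt {A : Matrix m m ℝ} (_hA : A.PosSemidef) :
    Matrix m m ℝ := CFC.sqrt A

open scoped MatrixOrder in
lemma Matrix.PosSemidef.posSemidef_sqrt {A : Matrix m m ℝ} (hA : A.PosSemidef) :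
    hA.sqrt.PosSemidef :=
  Matrix.nonneg_iff_posSemidef.1 (CFC.sqrt_nonneg A)

open scoped MatrixOrder in
lemma Matrix.PosSemidef.sqrt_mul_self {A : Matrix m m ℝ} (hA : A.PosSemidef) :
    hA.sqrt * hA.sqrt = A :=
  CFC.sqrt_mul_sqrt_self A (Matrix.nonneg_iff_posSemidef.2 hA)

open scoped MatrixOrder in
lemma Matrix.PosSemidef.eq_sqrt_of_sq_eq {B A : Matrix m m ℝ} (hB : B.PosSemidef)
    (hA : A.PosSemidef) (h : B ^ 2 = A) : B = hA.sqrt :=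
  (CFC.sqrt_unique (by rw [← pow_two, h]) (Matrix.nonneg_iff_posSemidef.2 hB)).symm

lemma symm_of_herm {M : Matrix m m ℝ} (h : M.IsHermitian) : Mᵀ = M := by
  rw [← Matrix.conjTranspose_eq_transpose_of_trivial]; exact h

lemma herm_of_symm {M : Matrix m m ℝ} (h : Mᵀ = M) : M.IsHermitian := by
  rw [Matrix.IsHermitian, Matrix.conjTranspose_eq_transpose_of_trivial]; exact h

lemma psd_apply {M : Matrix m m ℝ} (h : M.PosSemidef) (x : m → ℝ) :
    0 ≤ x ⬝ᵥ M *ᵥ x := by simpa using h.dotProduct_mulVec_nonneg x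

lemma pd_apply {M : Matrix m m ℝ} (h : M.PosDef) {x : m → ℝ} (hx : x ≠ 0) :
    0 < x ⬝ᵥ M *ᵥ x := by simpa using h.dotProduct_mulVec_pos hx

lemma psd_of {M : Matrix m m ℝ} (h1 : Mᵀ = M) (h2 : ∀ x, 0 ≤ x ⬝ᵥ M *ᵥ x) :
    M.PosSemidef := Matrix.PosSemidef.of_dotProduct_mulVec_nonneg (herm_of_symm h1) fun x => by simpa using h2 x

lemma dot_symm {M : Matrix m m ℝ} (h : Mᵀ = M) (u v : m → ℝ) :
    u ⬝ᵥ M *ᵥ v = v ⬝ᵥ M *ᵥ u := by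
  rw [Matrix.dotProduct_mulVec, ← Matrix.mulVec_transpose, h, dotProduct_comm]

lemma qf_congr (P C : Matrix m m ℝ) (z : m → ℝ) :
    z ⬝ᵥ (Cᵀ * P * C) *ᵥ z = (C *ᵥ z) ⬝ᵥ P *ᵥ (C *ᵥ z) := by
  rw [← Matrix.mulVec_mulVec, ← Matrix.mulVec_mulVec, Matrix.dotProduct_mulVec,
    Matrix.vecMul_transpose]

lemma qf_smul (A : Matrix m m ℝ) (t : ℝ) (z : m → ℝ) :
    (t • z) ⬝ᵥ A *ᵥ (t • z) = t ^ 2 * (z ⬝ᵥ A *ᵥ z) := by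
  rw [Matrix.mulVec_smul, dotProduct_smul, smul_dotProduct]
  simp [smul_smul, pow_two]; ring

lemma qf_CS {P : Matrix m m ℝ} (hP : P.PosSemidef) (u v : m → ℝ) :
    (u ⬝ᵥ P *ᵥ v) ^ 2 ≤ (u ⬝ᵥ P *ᵥ u) * (v ⬝ᵥ P *ᵥ v) := by
  have hs := symm_of_herm hP.1
  have key : ∀ t : ℝ, 0 ≤ (v ⬝ᵥ P *ᵥ v) * (t * t) + (2 * (u ⬝ᵥ P *ᵥ v)) * t + u ⬝ᵥ P *ᵥ u := by
    intro t
    have h0 := psd_apply hP (u + t • v)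
    have expand : (u + t • v) ⬝ᵥ P *ᵥ (u + t • v) =
        (v ⬝ᵥ P *ᵥ v) * (t * t) + (2 * (u ⬝ᵥ P *ᵥ v)) * t + u ⬝ᵥ P *ᵥ u := by
      rw [Matrix.mulVec_add, dotProduct_add, add_dotProduct,
        add_dotProduct, Matrix.mulVec_smul, dotProduct_smul,
        smul_dotProduct, smul_dotProduct, dotProduct_smul]
      rw [dot_symm hs v u]
      simp [smul_eq_mul]; ring
    linarith [expand ▸ h0]
  have hd := discrim_le_zero key
  rw [discrim] at hd
  nlinarith [hd]

lemma posdef_of_psd_isUnit {M : Matrix m m ℝ} (h : M.PosSemidef) (hu : IsUnit M) :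
    M.PosDef := by
  refine Matrix.PosDef.of_dotProduct_mulVec_pos h.1 (fun x hx => ?_)
  rcases lt_or_eq_of_le (h.dotProduct_mulVec_nonneg x) with hlt | heq
  · exact hlt
  · exfalso
    have h0 : M *ᵥ x = 0 := (h.dotProduct_mulVec_zero_iff x).1 heq.symm
    have : x = 0 := by
      have := congrArg (fun v => M⁻¹ *ᵥ v) h0
      simpa [Matrix.mulVec_mulVec, Matrix.nonsing_inv_mul M
        ((Matrix.isUnit_iff_isUnit_det M).1 hu)] using this
    exact hx this

lemma pd_mul_inv {M : Matrix m m ℝ} (h : M.PosDef) : M * M⁻¹ = 1 :=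
  Matrix.mul_nonsing_inv M ((Matrix.isUnit_iff_isUnit_det M).1 h.isUnit)

lemma pd_inv_mul {M : Matrix m m ℝ} (h : M.PosDef) : M⁻¹ * M = 1 :=
  Matrix.nonsing_inv_mul M ((Matrix.isUnit_iff_isUnit_det M).1 h.isUnit)

lemma pd_inv_transpose {M : Matrix m m ℝ} (h : M.PosDef) : (M⁻¹)ᵀ = M⁻¹ := by
  rw [Matrix.transpose_nonsing_inv, symm_of_herm h.1]

lemma sqrt_posDef {W : Matrix m m ℝ} (hW : W.PosDef) : hW.posSemidef.sqrt.PosDef := by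
  have hpsd := hW.posSemidef.posSemidef_sqrt
  apply posdef_of_psd_isUnit hpsd
  rw [Matrix.isUnit_iff_isUnit_det]
  have h : hW.posSemidef.sqrt.det * hW.posSemidef.sqrt.det = W.det := by
    rw [← Matrix.det_mul, hW.posSemidef.sqrt_mul_self]
  apply isUnit_of_mul_isUnit_left (y := hW.posSemidef.sqrt.det)
  rw [h]; exact hW.isUnit.map Matrix.detMonoidHom

/-- congruence of psd by (not nec. symmetric) B on the left: B * P * Bᵀ psd -/
lemma psd_congr {P : Matrix m m ℝ} (hP : P.PosSemidef) (B : Matrix m m ℝ) :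
    (B * P * Bᵀ).PosSemidef := by
  have := hP.mul_mul_conjTranspose_same B
  rwa [Matrix.conjTranspose_eq_transpose_of_trivial] at this

lemma pd_congr {P : Matrix m m ℝ} (hP : P.PosDef) {B : Matrix m m ℝ} (hB : IsUnit B) :
    (B * P * Bᵀ).PosDef := by
  apply posdef_of_psd_isUnit (psd_congr hP.posSemidef B)
  refine (hB.mul hP.isUnit).mul ((Matrix.isUnit_iff_isUnit_det _).2 ?_)
  rw [Matrix.det_transpose]; exact (Matrix.isUnit_iff_isUnit_det _).1 hB

lemma mcancel {A B : Matrix m m ℝ} (h : A * B = 1) (C : Matrix m m ℝ) :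
    A * (B * C) = C := by rw [← Matrix.mul_assoc, h, Matrix.one_mul]

lemma sqrt_symplectic {X J : Matrix m m ℝ} (hX : X.PosDef)
    (hJo : J * Jᵀ = 1) (hJs : Jᵀ = -J) (hXJ : X * (J * X) = J) :
    hX.posSemidef.sqrt * (J * hX.posSemidef.sqrt) = J := by
  set Y := hX.posSemidef.sqrt with hYdef
  have hY : Y.PosDef := sqrt_posDef hX
  have hY2 : Y * Y = X := hX.posSemidef.sqrt_mul_self
  have hYs : Yᵀ = Y := symm_of_herm hY.1
  have hXi : X⁻¹.PosDef := hX.inv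
  have hJtJ : Jᵀ * J = 1 := by rw [hJs, Matrix.neg_mul, ← Matrix.mul_neg, ← hJs, hJo]
  have hXX : X * X⁻¹ = 1 := pd_mul_inv hX
  have hXJ' : X * J = J * X⁻¹ := by
    have : X * (J * (X * X⁻¹)) = X * J := by rw [hXX, Matrix.mul_one]
    rw [← this, ← Matrix.mul_assoc J X X⁻¹, ← Matrix.mul_assoc, ← Matrix.mul_assoc,
      Matrix.mul_assoc X J X, hXJ]
  have hJXJ : Jᵀ * (X * J) = X⁻¹ := by
    rw [hXJ', mcancel hJtJ]
  set Z := Jᵀ * Y * J with hZdef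
  have hZdef' : Z = Jᵀ * (Y * J) := by rw [hZdef, Matrix.mul_assoc]
  have hZpsd : Z.PosSemidef := by
    have := psd_congr hY.posSemidef Jᵀ
    rwa [Matrix.transpose_transpose] at this
  have hZ2 : Z * Z = X⁻¹ := by
    rw [hZdef', show Jᵀ * (Y * J) * (Jᵀ * (Y * J)) = Jᵀ * (Y * (J * (Jᵀ * (Y * J)))) by
      simp only [Matrix.mul_assoc]]
    rw [mcancel hJo, ← Matrix.mul_assoc Y Y J, hY2, hJXJ]
  have hYi2 : Y⁻¹ * Y⁻¹ = X⁻¹ := by rw [← Matrix.mul_inv_rev, hY2]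
  have hZeq : Z = hXi.posSemidef.sqrt :=
    hZpsd.eq_sqrt_of_sq_eq hXi.posSemidef (by rw [pow_two, hZ2])
  have hYieq : Y⁻¹ = hXi.posSemidef.sqrt :=
    hY.inv.posSemidef.eq_sqrt_of_sq_eq hXi.posSemidef (by rw [pow_two, hYi2])
  have hZY : Z = Y⁻¹ := by rw [hZeq, hYieq]
  have h1 : Y * (Jᵀ * (Y * J)) = 1 := by
    rw [← hZdef', hZY, pd_mul_inv hY]
  have h2 : Y * (Jᵀ * Y) = Jᵀ := by
    have : Y * (Jᵀ * (Y * (J * Jᵀ))) = Y * (Jᵀ * Y) := by rw [hJo, Matrix.mul_one]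
    rw [← this, show Y * (Jᵀ * (Y * (J * Jᵀ))) = (Y * (Jᵀ * (Y * J))) * Jᵀ by
      simp only [Matrix.mul_assoc], h1, Matrix.one_mul]
  rw [hJs] at h2
  have h3 : -(Y * (J * Y)) = -J := by
    simpa [Matrix.mul_neg, Matrix.neg_mul] using h2
  exact neg_injective h3

lemma one_le_sqrt {W : Matrix m m ℝ} (hW : W.PosDef)
    (h : ∀ z, z ⬝ᵥ z ≤ z ⬝ᵥ W *ᵥ z) :
    ∀ z, z ⬝ᵥ z ≤ z ⬝ᵥ hW.posSemidef.sqrt *ᵥ z := by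
  set B := hW.posSemidef.sqrt with hBdef
  have hB : B.PosDef := sqrt_posDef hW
  have hB2 : B * B = W := hW.posSemidef.sqrt_mul_self
  have hD : (B + 1).PosDef := hB.add_posSemidef Matrix.PosSemidef.one
  set R := hD.posSemidef.sqrt with hRdef
  have hR : R.PosDef := sqrt_posDef hD
  have hR2 : R * R = B + 1 := hD.posSemidef.sqrt_mul_self
  have hRs : (R⁻¹)ᵀ = R⁻¹ := pd_inv_transpose hR
  have hWm1 : (W - 1).PosSemidef := by
    refine psd_of ?_ ?_
    · rw [Matrix.transpose_sub, symm_of_herm hW.1, Matrix.transpose_one]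
    · intro z
      have := h z
      rw [Matrix.sub_mulVec, dotProduct_sub, Matrix.one_mulVec]
      linarith
  have hB1 : B = R * R - 1 := by rw [hR2]; abel
  have hcomm : (B - 1) * R = R * (B - 1) := by
    rw [hB1]
    simp only [Matrix.sub_mul, Matrix.mul_sub, Matrix.one_mul, Matrix.mul_one,
      Matrix.mul_assoc]
  have hCD : (B - 1) * (R * R) = W - 1 := by
    rw [hR2, ← hB2]
    simp only [Matrix.sub_mul, Matrix.mul_add, Matrix.one_mul, Matrix.mul_one,
      Matrix.add_mul, Matrix.sub_mul]
    abel
  have key : R⁻¹ * (W - 1) * R⁻¹ = B - 1 := by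
    rw [← hCD, show (B - 1) * (R * R) = ((B - 1) * R) * R by rw [Matrix.mul_assoc], hcomm]
    rw [show R⁻¹ * (R * (B - 1) * R) * R⁻¹ = R⁻¹ * (R * ((B - 1) * (R * R⁻¹))) by
      simp only [Matrix.mul_assoc], pd_mul_inv hR, Matrix.mul_one,
      mcancel (pd_inv_mul hR)]
  have hBm1 : (B - 1).PosSemidef := by
    have := psd_congr hWm1 R⁻¹
    rwa [hRs, key] at this
  intro z
  have := psd_apply hBm1 z
  rw [Matrix.sub_mulVec, dotProduct_sub, Matrix.one_mulVec] at this
  linarith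

lemma inv_antitone {M X : Matrix m m ℝ} (hM : M.PosDef) (hX : X.PosDef)
    (h : ∀ z, z ⬝ᵥ M *ᵥ z ≤ z ⬝ᵥ X *ᵥ z) :
    ∀ z, z ⬝ᵥ X⁻¹ *ᵥ z ≤ z ⬝ᵥ M⁻¹ *ᵥ z := by
  intro z
  have hCS := qf_CS hM.posSemidef (X⁻¹ *ᵥ z) (M⁻¹ *ᵥ z)
  simp only [Matrix.mulVec_mulVec, pd_mul_inv hM, Matrix.one_mulVec] at hCS
  have hb : (X⁻¹ *ᵥ z) ⬝ᵥ M *ᵥ (X⁻¹ *ᵥ z) ≤ (X⁻¹ *ᵥ z) ⬝ᵥ z := by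
    have := h (X⁻¹ *ᵥ z)
    simpa only [Matrix.mulVec_mulVec, pd_mul_inv hX, Matrix.one_mulVec] using this
  have hb0 : 0 ≤ (X⁻¹ *ᵥ z) ⬝ᵥ M *ᵥ (X⁻¹ *ᵥ z) := psd_apply hM.posSemidef _
  rw [Matrix.mulVec_mulVec] at hb hb0
  have hc0 : 0 ≤ (X⁻¹ *ᵥ z) ⬝ᵥ z := by
    rw [dotProduct_comm]; exact psd_apply hX.inv.posSemidef z
  have hd0 : 0 ≤ (M⁻¹ *ᵥ z) ⬝ᵥ z := by
    rw [dotProduct_comm]; exact psd_apply hM.inv.posSemidef z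
  rw [dotProduct_comm z (X⁻¹ *ᵥ z), dotProduct_comm z (M⁻¹ *ᵥ z)]
  rcases eq_or_lt_of_le hc0 with heq | hlt
  · linarith
  · nlinarith

section core
variable {J M : Matrix m m ℝ} (hJo : J * Jᵀ = 1) (hJs : Jᵀ = -J)

include hJo hJs

lemma J_unit : IsUnit J :=
  (Matrix.isUnit_iff_isUnit_det J).2 (Matrix.isUnit_det_of_right_inverse hJo)

lemma core_fwd (hM : M.PosDef) (S : Matrix m m ℝ)
    (hS : Sᵀ * J * S = J)
    (h2 : ∀ z, z ⬝ᵥ (Sᵀ * M * S) *ᵥ z ≤ z ⬝ᵥ z) :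
    ∀ z, z ⬝ᵥ M *ᵥ z ≤ z ⬝ᵥ (J * M⁻¹ * Jᵀ) *ᵥ z := by
  have hJu : IsUnit J := J_unit hJo hJs
  have hJd : IsUnit J.det := (Matrix.isUnit_iff_isUnit_det J).1 hJu
  -- S is invertible
  have hSu : IsUnit S := by
    have hdet := congrArg Matrix.det hS
    rw [Matrix.det_mul, Matrix.det_mul, Matrix.det_transpose] at hdet
    rw [Matrix.isUnit_iff_isUnit_det, isUnit_iff_ne_zero]
    intro h0
    rw [h0, mul_zero] at hdet
    exact (isUnit_iff_ne_zero.1 hJd) hdet.symm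
  have hSd : IsUnit S.det := (Matrix.isUnit_iff_isUnit_det S).1 hSu
  have hSSi : S * S⁻¹ = 1 := Matrix.mul_nonsing_inv S hSd
  have hSiS : S⁻¹ * S = 1 := Matrix.nonsing_inv_mul S hSd
  have hSiT : (Sᵀ)⁻¹ = (S⁻¹)ᵀ := (Matrix.transpose_nonsing_inv S).symm
  -- S⁻¹ is symplectic
  have hSi : (S⁻¹)ᵀ * (J * S⁻¹) = J := by
    have h1 : (S⁻¹)ᵀ * ((Sᵀ * J * S) * S⁻¹) = (S⁻¹)ᵀ * (J * S⁻¹) := by rw [hS]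
    rw [← h1, show (S⁻¹)ᵀ * ((Sᵀ * J * S) * S⁻¹) =
      ((S⁻¹)ᵀ * Sᵀ) * (J * (S * S⁻¹)) by simp only [Matrix.mul_assoc],
      ← Matrix.transpose_mul, hSSi, Matrix.transpose_one, Matrix.one_mul,
      Matrix.mul_one]
  have hJinv : J⁻¹ = Jᵀ := Matrix.inv_eq_right_inv hJo
  -- Sᵀ is symplectic: S⁻¹ * J * (S⁻¹)ᵀ = J
  have hSiT2 : S⁻¹ * (J * (S⁻¹)ᵀ) = J := by
    have hinv := congrArg (fun (A : Matrix m m ℝ) => A⁻¹) hS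
    rw [Matrix.mul_inv_rev, Matrix.mul_inv_rev, hJinv, hSiT, hJs] at hinv
    have : S⁻¹ * (J * (S⁻¹)ᵀ) = -(S⁻¹ * (-J * (S⁻¹)ᵀ)) := by
      simp only [Matrix.neg_mul, Matrix.mul_neg, neg_neg]
    rw [this, hinv, neg_neg]
  have hSiu : IsUnit S⁻¹ := Matrix.isUnit_nonsing_inv_iff.2 hSu
  have hSitu : IsUnit (S⁻¹)ᵀ := by
    rw [Matrix.isUnit_iff_isUnit_det, Matrix.det_transpose,
      ← Matrix.isUnit_iff_isUnit_det]
    exact hSiu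
  set X := (S⁻¹)ᵀ * S⁻¹ with hXdef
  have hXpd : X.PosDef := by
    have hpsd : X.PosSemidef := by
      have := Matrix.posSemidef_conjTranspose_mul_self (S⁻¹)
      rwa [Matrix.conjTranspose_eq_transpose_of_trivial] at this
    exact posdef_of_psd_isUnit hpsd (hSitu.mul hSiu)
  have hXs : Xᵀ = X := symm_of_herm hXpd.1
  have hMX : ∀ z, z ⬝ᵥ M *ᵥ z ≤ z ⬝ᵥ X *ᵥ z := by
    intro z
    have h2' := h2 (S⁻¹ *ᵥ z)
    rw [qf_congr M S (S⁻¹ *ᵥ z), Matrix.mulVec_mulVec, hSSi, Matrix.one_mulVec] at h2'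
    calc z ⬝ᵥ M *ᵥ z ≤ (S⁻¹ *ᵥ z) ⬝ᵥ (S⁻¹ *ᵥ z) := h2'
    _ = z ⬝ᵥ ((S⁻¹)ᵀ * 1 * S⁻¹) *ᵥ z := by
        rw [qf_congr 1 S⁻¹ z, Matrix.one_mulVec]
    _ = z ⬝ᵥ X *ᵥ z := by rw [Matrix.mul_one, hXdef]
  have hXJX : X * (J * X) = J := by
    rw [hXdef, show ((S⁻¹)ᵀ * S⁻¹) * (J * ((S⁻¹)ᵀ * S⁻¹)) =
      (S⁻¹)ᵀ * ((S⁻¹ * (J * (S⁻¹)ᵀ)) * S⁻¹) by simp only [Matrix.mul_assoc],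
      hSiT2]
    exact hSi
  have hIA := inv_antitone hM hXpd hMX
  -- J * X⁻¹ * Jᵀ = X
  have hXJ' : X * J = J * X⁻¹ := by
    have hXX : X * X⁻¹ = 1 := pd_mul_inv hXpd
    have : X * (J * (X * X⁻¹)) = X * J := by rw [hXX, Matrix.mul_one]
    rw [← this, ← Matrix.mul_assoc J X X⁻¹, ← Matrix.mul_assoc, ← Matrix.mul_assoc,
      Matrix.mul_assoc X J X, hXJX]
  have hJXJ : J * X⁻¹ * Jᵀ = X := by
    rw [← hXJ', Matrix.mul_assoc, hJo, Matrix.mul_one]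
  intro z
  calc z ⬝ᵥ M *ᵥ z ≤ z ⬝ᵥ X *ᵥ z := hMX z
  _ = z ⬝ᵥ ((Jᵀ)ᵀ * X⁻¹ * Jᵀ) *ᵥ z := by rw [Matrix.transpose_transpose, hJXJ]
  _ = (Jᵀ *ᵥ z) ⬝ᵥ X⁻¹ *ᵥ (Jᵀ *ᵥ z) := qf_congr _ _ _
  _ ≤ (Jᵀ *ᵥ z) ⬝ᵥ M⁻¹ *ᵥ (Jᵀ *ᵥ z) := hIA _
  _ = z ⬝ᵥ ((Jᵀ)ᵀ * M⁻¹ * Jᵀ) *ᵥ z := (qf_congr _ _ _).symm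
  _ = z ⬝ᵥ (J * M⁻¹ * Jᵀ) *ᵥ z := by rw [Matrix.transpose_transpose]

lemma core_bwd (hM : M.PosDef)
    (h : ∀ z, z ⬝ᵥ M *ᵥ z ≤ z ⬝ᵥ (J * M⁻¹ * Jᵀ) *ᵥ z) :
    ∃ S, Sᵀ * J * S = J ∧ ∀ z, z ⬝ᵥ (Sᵀ * M * S) *ᵥ z ≤ z ⬝ᵥ z := by
  have hJu : IsUnit J := J_unit hJo hJs
  have hJJ : J * J = -1 := by
    have := hJo; rwa [hJs, Matrix.mul_neg, neg_eq_iff_eq_neg] at this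
  -- A = sqrt M
  set A := hM.posSemidef.sqrt with hAdef
  have hA : A.PosDef := sqrt_posDef hM
  have hA2 : A * A = M := hM.posSemidef.sqrt_mul_self
  have hAs : Aᵀ = A := symm_of_herm hA.1
  have hAi : (A⁻¹).PosDef := hA.inv
  have hAis : (A⁻¹)ᵀ = A⁻¹ := pd_inv_transpose hA
  have hAAi : A * A⁻¹ = 1 := pd_mul_inv hA
  have hAiA : A⁻¹ * A = 1 := pd_inv_mul hA
  have hAiAi : A⁻¹ * A⁻¹ = M⁻¹ := by rw [← Matrix.mul_inv_rev, hA2]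
  -- N and W
  set N := J * M⁻¹ * Jᵀ with hNdef
  have hN : N.PosDef := pd_congr hM.inv hJu
  set W := A⁻¹ * N * A⁻¹ with hWdef
  have hW : W.PosDef := by
    have := pd_congr hN hAi.isUnit
    rwa [hAis] at this
  have hW1 : ∀ z, z ⬝ᵥ z ≤ z ⬝ᵥ W *ᵥ z := by
    intro z
    have e1 : z ⬝ᵥ W *ᵥ z = (A⁻¹ *ᵥ z) ⬝ᵥ N *ᵥ (A⁻¹ *ᵥ z) := by
      have e := qf_congr N (A⁻¹) z
      rw [hAis] at e
      rw [hWdef]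
      exact e
    have e2 : (A⁻¹ *ᵥ z) ⬝ᵥ M *ᵥ (A⁻¹ *ᵥ z) = z ⬝ᵥ z := by
      have e := qf_congr M (A⁻¹) z
      rw [hAis] at e
      rw [← e, ← hA2, show A⁻¹ * (A * A) * A⁻¹ = (A⁻¹ * A) * (A * A⁻¹) by
        simp only [Matrix.mul_assoc], hAiA, hAAi, Matrix.one_mul, Matrix.one_mulVec]
    have := h (A⁻¹ *ᵥ z)
    rw [e2] at this
    rw [e1]
    exact this
  -- B = sqrt W
  set B := hW.posSemidef.sqrt with hBdef
  have hB : B.PosDef := sqrt_posDef hW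
  have hB2 : B * B = W := hW.posSemidef.sqrt_mul_self
  have hBs : Bᵀ = B := symm_of_herm hB.1
  have hBi : (B⁻¹).PosDef := hB.inv
  have hBBi : B * B⁻¹ = 1 := pd_mul_inv hB
  have hBiB : B⁻¹ * B = 1 := pd_inv_mul hB
  have h1B : ∀ z, z ⬝ᵥ z ≤ z ⬝ᵥ B *ᵥ z := one_le_sqrt hW hW1
  -- K = A * J * A and its inverse up to sign
  set K := A * (J * A) with hKdef
  have hKt : Kᵀ = -K := by
    rw [hKdef, Matrix.transpose_mul, Matrix.transpose_mul, hAs, hJs]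
    simp only [Matrix.mul_neg, Matrix.neg_mul, Matrix.mul_assoc]
  set Ki := A⁻¹ * (J * A⁻¹) with hKidef
  have hKKi : K * Ki = -1 := by
    rw [hKdef, hKidef, show A * (J * A) * (A⁻¹ * (J * A⁻¹)) =
      A * (J * ((A * A⁻¹) * (J * A⁻¹))) by simp only [Matrix.mul_assoc], hAAi,
      Matrix.one_mul, ← Matrix.mul_assoc J J A⁻¹, hJJ]
    simp only [Matrix.neg_mul, Matrix.one_mul, Matrix.mul_neg, hAAi]
  have hKiK : Ki * K = -1 := by
    rw [hKdef, hKidef, show A⁻¹ * (J * A⁻¹) * (A * (J * A)) =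
      A⁻¹ * (J * ((A⁻¹ * A) * (J * A))) by simp only [Matrix.mul_assoc], hAiA,
      Matrix.one_mul, ← Matrix.mul_assoc J J A, hJJ]
    simp only [Matrix.neg_mul, Matrix.one_mul, Matrix.mul_neg, hAiA]
  -- W = -(Ki * Ki)
  have hWK : W = -(Ki * Ki) := by
    rw [hWdef, hNdef, hKidef, hJs, show A⁻¹ * (J * M⁻¹ * -J) * A⁻¹ =
      A⁻¹ * (J * (M⁻¹ * (-J * A⁻¹))) by simp only [Matrix.mul_assoc], ← hAiAi]
    simp only [Matrix.neg_mul, Matrix.mul_neg, Matrix.mul_assoc]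
  have hWinv : W⁻¹ = -(K * K) := by
    apply Matrix.inv_eq_right_inv
    rw [hWK, Matrix.neg_mul, Matrix.mul_neg, neg_neg, show Ki * Ki * (K * K) =
      Ki * ((Ki * K) * K) by simp only [Matrix.mul_assoc], hKiK]
    simp only [Matrix.neg_mul, Matrix.one_mul, Matrix.mul_neg, hKiK, neg_neg]
  -- the key commutation identity via uniqueness of psd square roots
  have hZpsd : (K * B * Kᵀ).PosSemidef := psd_congr hB.posSemidef K
  have hKtK : Kᵀ * K = W⁻¹ := by rw [hKt, hWinv, Matrix.neg_mul]
  have hBWiB : B * (W⁻¹ * B) = 1 := by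
    rw [show W⁻¹ = B⁻¹ * B⁻¹ by rw [← Matrix.mul_inv_rev, hB2], ← Matrix.mul_assoc,
      ← Matrix.mul_assoc, hBBi, Matrix.one_mul, hBiB]
  have hZ2 : (K * B * Kᵀ) * (K * B * Kᵀ) = W⁻¹ := by
    rw [show (K * B * Kᵀ) * (K * B * Kᵀ) = K * ((B * ((Kᵀ * K) * B)) * Kᵀ) by
      simp only [Matrix.mul_assoc], hKtK, ← Matrix.mul_assoc B W⁻¹ B,
      Matrix.mul_assoc B W⁻¹ B]
    rw [hBWiB, Matrix.one_mul, hKt, Matrix.mul_neg, hWinv]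
  have hZeq : K * B * Kᵀ = B⁻¹ := by
    have e1 : K * B * Kᵀ = (hW.inv.posSemidef).sqrt :=
      hZpsd.eq_sqrt_of_sq_eq hW.inv.posSemidef (by rw [pow_two, hZ2])
    have e2 : B⁻¹ = (hW.inv.posSemidef).sqrt :=
      hBi.posSemidef.eq_sqrt_of_sq_eq hW.inv.posSemidef
        (by rw [pow_two, ← Matrix.mul_inv_rev, hB2])
    rw [e1, ← e2]
  have hKBK : K * (B * K) = -B⁻¹ := by
    have h3 : -(K * (B * K)) = B⁻¹ := by
      rw [← hZeq, hKt]; simp only [Matrix.mul_neg, Matrix.mul_assoc, neg_neg]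
    rw [← h3, neg_neg]
  have h4 : -(B * K) = -(Ki * B⁻¹) := by
    have h5 := congrArg (fun T => Ki * T) hKBK
    rw [show Ki * (K * (B * K)) = (Ki * K) * (B * K) by simp only [Matrix.mul_assoc],
      hKiK, Matrix.neg_mul, Matrix.one_mul, Matrix.mul_neg] at h5
    exact h5
  have hBK : B * K = Ki * B⁻¹ := neg_injective h4
  have hBKB : B * (K * B) = Ki := by
    rw [← Matrix.mul_assoc, hBK, Matrix.mul_assoc, hBiB, Matrix.mul_one]
  -- X = A * B * A
  set X := A * (B * A) with hXdef
  have hXpd : X.PosDef := by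
    have := pd_congr hB hA.isUnit
    rw [hAs] at this
    rw [hXdef, ← Matrix.mul_assoc]
    exact this
  have hMX : ∀ z, z ⬝ᵥ M *ᵥ z ≤ z ⬝ᵥ X *ᵥ z := by
    intro z
    have e1 : z ⬝ᵥ X *ᵥ z = (A *ᵥ z) ⬝ᵥ B *ᵥ (A *ᵥ z) := by
      have e := qf_congr B A z
      rw [hAs] at e
      rw [hXdef, ← Matrix.mul_assoc]
      exact e
    have e2 : z ⬝ᵥ M *ᵥ z = (A *ᵥ z) ⬝ᵥ (A *ᵥ z) := by
      have e := qf_congr 1 A z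
      rw [hAs, Matrix.mul_one, hA2, Matrix.one_mulVec] at e
      exact e
    rw [e1, e2]
    exact h1B (A *ᵥ z)
  have hXJX : X * (J * X) = J := by
    rw [hXdef, show A * (B * A) * (J * (A * (B * A))) =
      A * (B * ((A * (J * A)) * (B * A))) by simp only [Matrix.mul_assoc], ← hKdef,
      show A * (B * (K * (B * A))) = A * ((B * (K * B)) * A) by
        simp only [Matrix.mul_assoc],
      hBKB, hKidef,
      show A * (A⁻¹ * (J * A⁻¹) * A) = (A * A⁻¹) * (J * (A⁻¹ * A)) by
        simp only [Matrix.mul_assoc],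
      hAAi, hAiA, Matrix.one_mul, Matrix.mul_one]
  have hY := sqrt_symplectic hXpd hJo hJs hXJX
  set Y := hXpd.posSemidef.sqrt with hYdef
  have hYpd : Y.PosDef := sqrt_posDef hXpd
  have hY2 : Y * Y = X := hXpd.posSemidef.sqrt_mul_self
  have hYis : (Y⁻¹)ᵀ = Y⁻¹ := pd_inv_transpose hYpd
  have hYYi : Y * Y⁻¹ = 1 := pd_mul_inv hYpd
  have hYiY : Y⁻¹ * Y = 1 := pd_inv_mul hYpd
  refine ⟨Y⁻¹, ?_, ?_⟩
  · have e : Y⁻¹ * ((Y * (J * Y)) * Y⁻¹) = J := by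
      rw [show Y⁻¹ * ((Y * (J * Y)) * Y⁻¹) = (Y⁻¹ * Y) * (J * (Y * Y⁻¹)) by
        simp only [Matrix.mul_assoc], hYiY, hYYi, Matrix.one_mul, Matrix.mul_one]
    rw [hY] at e
    rw [hYis, Matrix.mul_assoc]
    exact e
  · intro z
    calc z ⬝ᵥ ((Y⁻¹)ᵀ * M * Y⁻¹) *ᵥ z = (Y⁻¹ *ᵥ z) ⬝ᵥ M *ᵥ (Y⁻¹ *ᵥ z) :=
          qf_congr _ _ _
    _ ≤ (Y⁻¹ *ᵥ z) ⬝ᵥ X *ᵥ (Y⁻¹ *ᵥ z) := hMX _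
    _ = z ⬝ᵥ ((Y⁻¹)ᵀ * X * Y⁻¹) *ᵥ z := (qf_congr _ _ _).symm
    _ = z ⬝ᵥ z := by
        have hXY : (Y⁻¹)ᵀ * X * Y⁻¹ = 1 := by
          rw [hYis, ← hY2, show Y⁻¹ * (Y * Y) * Y⁻¹ = (Y⁻¹ * Y) * (Y * Y⁻¹) by
            simp only [Matrix.mul_assoc], hYiY, hYYi, Matrix.one_mul]
        rw [hXY, Matrix.one_mulVec]

end core

-- scaling / support function layer

lemma dot_self_nonneg (z : m → ℝ) : 0 ≤ z ⬝ᵥ z :=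
  Finset.sum_nonneg fun i _ => mul_self_nonneg _

lemma dot_self_pos {z : m → ℝ} (hz : z ≠ 0) : 0 < z ⬝ᵥ z :=
  lt_of_le_of_ne (dot_self_nonneg z) (fun h => hz (dotProduct_self_eq_zero.1 h.symm))

lemma qf_smul_mat (c : ℝ) (P : Matrix m m ℝ) (z : m → ℝ) :
    z ⬝ᵥ (c • P) *ᵥ z = c * (z ⬝ᵥ P *ᵥ z) := by
  rw [Matrix.smul_mulVec, dotProduct_smul, smul_eq_mul]

lemma pd_smul {P : Matrix m m ℝ} (hP : P.PosDef) {c : ℝ} (hc : 0 < c) :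
    (c • P).PosDef := by
  refine Matrix.PosDef.of_dotProduct_mulVec_pos ?_ ?_
  · have := symm_of_herm hP.1
    apply herm_of_symm
    rw [Matrix.transpose_smul, this]
  · intro x hx
    have := pd_apply hP hx
    have e : (star x) ⬝ᵥ (c • P) *ᵥ x = c * (x ⬝ᵥ P *ᵥ x) := by
      rw [show star x = x from star_trivial x, qf_smul_mat]
    rw [e]
    positivity

/-- Scaling characterization of ellipsoid inclusion. -/
lemma quad_scale {G F : Matrix m m ℝ} {r : ℝ} (hr : 0 < r)
    (hGpos : ∀ z, z ≠ 0 → 0 < z ⬝ᵥ G *ᵥ z) :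
    (∀ z, z ⬝ᵥ G *ᵥ z ≤ r → z ⬝ᵥ F *ᵥ z ≤ 1) ↔
      (∀ z, r * (z ⬝ᵥ F *ᵥ z) ≤ z ⬝ᵥ G *ᵥ z) := by
  constructor
  · intro h z
    by_cases hz : z = 0
    · simp [hz, Matrix.mulVec_zero]
    · set c := z ⬝ᵥ G *ᵥ z with hc
      have hc0 : 0 < c := hGpos z hz
      set t := Real.sqrt (r / c) with ht
      have ht2 : t ^ 2 = r / c := Real.sq_sqrt (by positivity)
      have hG : (t • z) ⬝ᵥ G *ᵥ (t • z) ≤ r := by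
        rw [qf_smul G t z, ht2, ← hc, div_mul_cancel₀ _ (ne_of_gt hc0)]
      have hF := h (t • z) hG
      rw [qf_smul F t z, ht2] at hF
      rw [div_mul_eq_mul_div, div_le_one hc0] at hF
      exact hF
  · intro h z hz
    have := h z
    have h1 : r * (z ⬝ᵥ F *ᵥ z) ≤ r * 1 := by
      rw [mul_one]; linarith
    exact le_of_mul_le_mul_left h1 hr

/-- support function of the ellipsoid z ⬝ Sig⁻¹ z ≤ 2. -/
lemma support_le {Sig : Matrix m m ℝ} (hS : Sig.PosDef) {r : ℝ} (hr : 0 < r) (w : m → ℝ) :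
    (∀ z, z ⬝ᵥ Sig⁻¹ *ᵥ z ≤ 2 → z ⬝ᵥ w ≤ r) ↔ 2 * (w ⬝ᵥ Sig *ᵥ w) ≤ r ^ 2 := by
  have hSi : Sig.PosDef := hS
  have hSiv : Sig⁻¹ *ᵥ (Sig *ᵥ w) = w := by
    rw [Matrix.mulVec_mulVec, pd_inv_mul hS, Matrix.one_mulVec]
  have hq : (Sig *ᵥ w) ⬝ᵥ Sig⁻¹ *ᵥ (Sig *ᵥ w) = w ⬝ᵥ Sig *ᵥ w := by
    rw [hSiv, dotProduct_comm]
  constructor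
  · intro h
    by_cases hw : w = 0
    · simp [hw, Matrix.mulVec_zero]
      positivity
    · set c := w ⬝ᵥ Sig *ᵥ w with hcdef
      have hc0 : 0 < c := pd_apply hS hw
      set t := Real.sqrt (2 / c) with ht
      have ht0 : 0 ≤ t := Real.sqrt_nonneg _
      have ht2 : t ^ 2 = 2 / c := Real.sq_sqrt (by positivity)
      have hmem : (t • (Sig *ᵥ w)) ⬝ᵥ Sig⁻¹ *ᵥ (t • (Sig *ᵥ w)) ≤ 2 := by
        rw [qf_smul, ht2, hq, div_mul_cancel₀ _ (ne_of_gt hc0)]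
      have hz := h _ hmem
      rw [smul_dotProduct, smul_eq_mul] at hz
      have hsw : (Sig *ᵥ w) ⬝ᵥ w = c := by rw [hcdef, dotProduct_comm]
      rw [hsw] at hz
      have htc : (t * c) ^ 2 = 2 * c := by
        rw [mul_pow, ht2]; field_simp
      have htc0 : 0 ≤ t * c := by positivity
      nlinarith
  · intro h z hz
    have hCS := qf_CS hS.inv.posSemidef z (Sig *ᵥ w)
    rw [hq, hSiv] at hCS
    have h2 : (z ⬝ᵥ w) ^ 2 ≤ 2 * (w ⬝ᵥ Sig *ᵥ w) := by
      have h0 : 0 ≤ w ⬝ᵥ Sig *ᵥ w := psd_apply hS.posSemidef w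
      have h1 : 0 ≤ z ⬝ᵥ Sig⁻¹ *ᵥ z := psd_apply hS.inv.posSemidef z
      nlinarith
    nlinarith

-- ### J matrix facts

variable {n : ℕ}

lemma Jt : (Jmat n)ᵀ = -Jmat n := by
  ext i j; rcases i with i|i <;> rcases j with j|j <;>
    simp [Jmat, fromBlocks, one_apply, eq_comm]

lemma JJ : Jmat n * Jmat n = -1 := by
  rw [Jmat, fromBlocks_multiply]
  ext i j; rcases i with i|i <;> rcases j with j|j <;>
    simp [fromBlocks, one_apply, eq_comm]

lemma J_mul_Jt : Jmat n * (Jmat n)ᵀ = 1 := by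
  rw [Jt, Matrix.mul_neg, JJ]; simp


/-- The covariance ellipsoid contains a quantum blob iff its symplectic polar dual is
contained in it. -/
theorem quantum_blob_iff_sympDual_subset (n : ℕ) (ℏ : ℝ) (hℏ : 0 < ℏ)
    (Sig : Matrix (Fin n ⊕ Fin n) (Fin n ⊕ Fin n) ℝ) (hSig : Sig.PosDef) :
    (∃ S ∈ Sp n, S.mulVec '' ball2n n ℏ ⊆ covEll n Sig) ↔
      sympDual n ℏ (covEll n Sig) ⊆ covEll n Sig := by
  set J := Jmat n with hJdef
  have hJo : J * Jᵀ = 1 := J_mul_Jt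
  have hJs : Jᵀ = -J := Jt
  have hJu : IsUnit J := J_unit hJo hJs
  set M : Matrix (Fin n ⊕ Fin n) (Fin n ⊕ Fin n) ℝ := (ℏ/2) • Sig⁻¹ with hMdef
  have hM : M.PosDef := pd_smul hSig.inv (by positivity)
  have hMinv : M⁻¹ = (2/ℏ) • Sig := by
    apply Matrix.inv_eq_right_inv
    rw [hMdef, Matrix.smul_mul, Matrix.mul_smul, smul_smul, pd_inv_mul hSig,
      show (ℏ/2) * (2/ℏ) = 1 by field_simp, one_smul]
  -- membership in covEll
  have memEll : ∀ z : PS n, z ∈ covEll n Sig ↔ z ⬝ᵥ Sig⁻¹ *ᵥ z ≤ 2 := by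
    intro z
    rw [covEll, Set.mem_setOf_eq, dotProduct_comm (Sig⁻¹ *ᵥ z) z]
    constructor <;> intro hh <;> linarith
  -- LHS equivalence
  have lhs_iff : ∀ S : Matrix (Fin n ⊕ Fin n) (Fin n ⊕ Fin n) ℝ,
      (S.mulVec '' ball2n n ℏ ⊆ covEll n Sig) ↔
      (∀ z, z ⬝ᵥ (Sᵀ * M * S) *ᵥ z ≤ z ⬝ᵥ z) := by
    intro S
    set F := Sᵀ * ((1/2 : ℝ) • Sig⁻¹) * S with hFdef
    have eF : ∀ z, z ⬝ᵥ F *ᵥ z = (1/2 : ℝ) * ((Sig⁻¹ *ᵥ (S *ᵥ z)) ⬝ᵥ (S *ᵥ z)) := by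
      intro z
      rw [hFdef, qf_congr ((1/2:ℝ) • Sig⁻¹) S z, qf_smul_mat,
        dotProduct_comm (S *ᵥ z) (Sig⁻¹ *ᵥ (S *ᵥ z))]
    have eM : ∀ z, ℏ * (z ⬝ᵥ F *ᵥ z) = z ⬝ᵥ (Sᵀ * M * S) *ᵥ z := by
      intro z
      have : Sᵀ * M * S = ℏ • F := by
        rw [hFdef, hMdef, show (ℏ/2 : ℝ) • Sig⁻¹ = ℏ • ((1/2 : ℝ) • Sig⁻¹) by
          rw [smul_smul, show (ℏ * (1/2) : ℝ) = ℏ/2 from by ring], Matrix.mul_smul,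
          Matrix.smul_mul]
      rw [this, qf_smul_mat]
    have hq := quad_scale (G := (1 : Matrix (Fin n ⊕ Fin n) (Fin n ⊕ Fin n) ℝ))
      (F := F) hℏ (fun z hz => by rw [Matrix.one_mulVec]; exact dot_self_pos hz)
    have e1 : (S.mulVec '' ball2n n ℏ ⊆ covEll n Sig) ↔
        (∀ z, z ⬝ᵥ (1 : Matrix (Fin n ⊕ Fin n) (Fin n ⊕ Fin n) ℝ) *ᵥ z ≤ ℏ →
          z ⬝ᵥ F *ᵥ z ≤ 1) := by
      rw [Set.image_subset_iff]
      constructor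
      · intro hsub z hz
        rw [Matrix.one_mulVec] at hz
        have := hsub (show z ∈ ball2n n ℏ from hz)
        rw [Set.mem_preimage, covEll, Set.mem_setOf_eq] at this
        rw [eF]
        exact this
      · intro hforall z hz
        rw [ball2n, Set.mem_setOf_eq] at hz
        rw [Set.mem_preimage, covEll, Set.mem_setOf_eq]
        have := hforall z (by rw [Matrix.one_mulVec]; exact hz)
        rw [eF] at this
        exact this
    rw [e1, hq]
    constructor
    · intro h z
      have := h z
      rw [eM z, Matrix.one_mulVec] at this
      exact this
    · intro h z
      rw [eM z, Matrix.one_mulVec]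
      exact h z
  -- RHS equivalence
  have symp_eq : ∀ z z' : PS n, symp n z z' = z ⬝ᵥ (Jᵀ *ᵥ z') := by
    intro z z'
    rw [symp, ← hJdef, dotProduct_comm, Matrix.dotProduct_mulVec,
      ← Matrix.mulVec_transpose, dotProduct_comm]
  have mem_dual : ∀ z' : PS n, z' ∈ sympDual n ℏ (covEll n Sig) ↔
      2 * ((Jᵀ *ᵥ z') ⬝ᵥ Sig *ᵥ (Jᵀ *ᵥ z')) ≤ ℏ^2 := by
    intro z'
    rw [← support_le hSig hℏ (Jᵀ *ᵥ z')]
    constructor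
    · intro hd z hz
      have := hd z ((memEll z).2 hz)
      rwa [symp_eq] at this
    · intro hs z hz
      rw [symp_eq]
      exact hs z ((memEll z).1 hz)
  have hGpd : (J * Sig * Jᵀ).PosDef := pd_congr hSig hJu
  have eG : ∀ z : PS n, 2 * ((Jᵀ *ᵥ z) ⬝ᵥ Sig *ᵥ (Jᵀ *ᵥ z)) =
      z ⬝ᵥ ((2:ℝ) • (J * Sig * Jᵀ)) *ᵥ z := by
    intro z
    rw [qf_smul_mat]
    congr 1
    have := qf_congr Sig Jᵀ z
    rw [Matrix.transpose_transpose] at this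
    exact this.symm
  have eN : ∀ z : PS n, z ⬝ᵥ (J * M⁻¹ * Jᵀ) *ᵥ z =
      (2/ℏ) * (z ⬝ᵥ (J * Sig * Jᵀ) *ᵥ z) := by
    intro z
    rw [hMinv, Matrix.mul_smul, Matrix.smul_mul, qf_smul_mat]
  have rhs_iff : (sympDual n ℏ (covEll n Sig) ⊆ covEll n Sig) ↔
      (∀ z, z ⬝ᵥ M *ᵥ z ≤ z ⬝ᵥ (J * M⁻¹ * Jᵀ) *ᵥ z) := by
    have hq := quad_scale (G := (2:ℝ) • (J * Sig * Jᵀ)) (F := (1/2 : ℝ) • Sig⁻¹)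
      (r := ℏ^2) (by positivity)
      (fun z hz => by rw [qf_smul_mat]; have := pd_apply hGpd hz; linarith)
    have e1 : (sympDual n ℏ (covEll n Sig) ⊆ covEll n Sig) ↔
        (∀ z, z ⬝ᵥ ((2:ℝ) • (J * Sig * Jᵀ)) *ᵥ z ≤ ℏ^2 →
          z ⬝ᵥ ((1/2 : ℝ) • Sig⁻¹) *ᵥ z ≤ 1) := by
      constructor
      · intro hsub z hz
        have := hsub ((mem_dual z).2 (by rw [eG z]; exact hz))
        rw [memEll] at this
        rw [qf_smul_mat]
        linarith
      · intro hforall z' hz'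
        rw [memEll]
        have h0 := (mem_dual z').1 hz'
        rw [eG z'] at h0
        have := hforall z' h0
        rw [qf_smul_mat] at this
        linarith
    rw [e1, hq]
    have key : ∀ a b : ℝ, (ℏ^2 * ((1/2) * a) ≤ 2 * b) ↔ ((ℏ/2) * a ≤ (2/ℏ) * b) := by
      intro a b
      rw [show (ℏ/2) * a = (1/ℏ) * (ℏ^2 * ((1/2) * a)) by field_simp,
        show (2/ℏ) * b = (1/ℏ) * (2 * b) by ring]
      exact (mul_le_mul_iff_of_pos_left (by positivity)).symm
    constructor
    · intro h z
      have h1 := h z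
      rw [qf_smul_mat, qf_smul_mat] at h1
      rw [hMdef, qf_smul_mat, eN z]
      exact (key _ _).1 h1
    · intro h z
      have h1 := h z
      rw [hMdef, qf_smul_mat, eN z] at h1
      rw [qf_smul_mat, qf_smul_mat]
      exact (key _ _).2 h1
  constructor
  · rintro ⟨S, hSp, hsub⟩
    rw [rhs_iff]
    exact core_fwd hJo hJs hM S hSp ((lhs_iff S).1 hsub)
  · intro hdual
    obtain ⟨S, hS1, hS2⟩ := core_bwd hJo hJs hM (rhs_iff.1 hdual)
    exact ⟨S, hS1, (lhs_iff S).2 hS2⟩
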